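/- Let g(z) = \sum_{k=0}^\infty b_k z^k be analytic on the unit disk with |g(z)| < 1 for all |z| < 1, and let 0 < R \le 1. Then \sum_{k=1}^\infty |b_k|^2 R^k \le R (1-|b_0|^2)^2 / (1 - |b_0|^2 R). -/

import Mathlib

set_option maxHeartbeats 1000000
open MeasureTheory Complex Filter Set

private lemma KP_absSummable (b : ℕ → ℂ)
    (hb : ∀ z : ℂ, ‖z‖ < 1 → Summable fun k => b k * z ^ k)
    {r : ℝ} (h0 : 0 ≤ r) (hr : r < 1) : Summable fun k => ‖b k‖ * r ^ k := by
  set ρ : ℝ := (1 + r) / 2 with hρ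
  have hrρ : r < ρ := by rw [hρ]; linarith
  have hρ1 : ρ < 1 := by rw [hρ]; linarith
  have hρ0 : 0 < ρ := by rw [hρ]; linarith
  have hs : Summable fun k => b k * (ρ : ℂ) ^ k := by
    apply hb
    rw [Complex.norm_real, Real.norm_eq_abs, abs_of_pos hρ0]; exact hρ1
  have ht : Tendsto (fun k => ‖b k * (ρ : ℂ) ^ k‖) atTop (nhds 0) := by
    simpa using hs.tendsto_atTop_zero.norm
  obtain ⟨C, hC⟩ := ht.bddAbove_range
  have hC' : ∀ k, ‖b k‖ * ρ ^ k ≤ C := by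
    intro k
    have := hC (Set.mem_range_self k)
    simpa [norm_mul, norm_pow, Complex.norm_real, Real.norm_eq_abs, abs_of_pos hρ0] using this
  have hgeo : Summable fun k : ℕ => C * (r / ρ) ^ k := by
    apply Summable.mul_left
    apply summable_geometric_of_lt_one (by positivity)
    rw [div_lt_one hρ0]; exact hrρ
  apply hgeo.of_nonneg_of_le (fun k => by positivity)
  intro k
  have : ‖b k‖ * r ^ k = (‖b k‖ * ρ ^ k) * (r / ρ) ^ k := by
    rw [mul_assoc, ← mul_pow, mul_div_cancel₀ r hρ0.ne']
  rw [this]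
  apply mul_le_mul_of_nonneg_right (hC' k) (by positivity)

private lemma KP_expInt (m : ℤ) :
    ∫ θ in Set.Ioc (0:ℝ) (2 * Real.pi), Complex.exp (m * θ * Complex.I)
      = if m = 0 then ((2 * Real.pi : ℝ) : ℂ) else 0 := by
  have h2π : (0:ℝ) ≤ 2 * Real.pi := by positivity
  rw [← intervalIntegral.integral_of_le h2π]
  rcases eq_or_ne m 0 with hm | hm
  · simp [hm, Complex.ofReal_mul]
  · have hc : (m : ℂ) * Complex.I ≠ 0 := by
      simp [Complex.ext_iff, Int.cast_injective.ne_iff, hm]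
    have : ∀ θ : ℝ, Complex.exp (m * θ * Complex.I) = Complex.exp ((m * Complex.I) * θ) := by
      intro θ; ring_nf
    simp_rw [this]
    rw [integral_exp_mul_complex hc]
    simp only [hm, if_false]
    have h1 : Complex.exp ((m : ℂ) * Complex.I * (2 * (Real.pi:ℂ))) = 1 := by
      rw [show ((m : ℂ) * Complex.I * (2 * (Real.pi:ℂ))) = (m : ℂ) * (2 * (Real.pi : ℂ) * Complex.I) by ring]
      exact Complex.exp_int_mul_two_pi_mul_I m
    rw [show ((2 * Real.pi : ℝ) : ℂ) = 2 * (Real.pi:ℂ) by push_cast; ring, h1]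
    simp
private lemma KP_sqSummable (b : ℕ → ℂ)
    (hb : ∀ z : ℂ, ‖z‖ < 1 → Summable fun k => b k * z ^ k)
    {r : ℝ} (h0 : 0 ≤ r) (hr : r < 1) :
    Summable fun k => ‖b k‖ ^ 2 * (r ^ 2) ^ k := by
  have hu := KP_absSummable b hb h0 hr
  obtain ⟨C, hC⟩ := (hu.tendsto_atTop_zero).bddAbove_range
  apply (hu.mul_left C).of_nonneg_of_le (fun k => by positivity)
  intro k
  have h1 : ‖b k‖ ^ 2 * (r ^ 2) ^ k = (‖b k‖ * r ^ k) * (‖b k‖ * r ^ k) := by ring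
  rw [h1]
  exact mul_le_mul_of_nonneg_right (hC (Set.mem_range_self k)) (by positivity)

private lemma KP_parseval (b : ℕ → ℂ)
    (hb : ∀ z : ℂ, ‖z‖ < 1 → Summable fun k => b k * z ^ k)
    {r : ℝ} (h0 : 0 ≤ r) (hr : r < 1) :
    (∫ θ in Set.Ioc (0:ℝ) (2 * Real.pi),
        ‖∑' k, b k * ((r:ℂ) * Complex.exp (θ * Complex.I)) ^ k‖ ^ 2)
      = 2 * Real.pi * ∑' k, ‖b k‖ ^ 2 * (r ^ 2) ^ k := by
  set μ := volume.restrict (Set.Ioc (0:ℝ) (2 * Real.pi)) with hμ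
  set z : ℝ → ℂ := fun θ => (r:ℂ) * Complex.exp (θ * Complex.I) with hzdef
  have hznorm : ∀ θ, ‖z θ‖ = r := by
    intro θ
    rw [hzdef]
    simp only [norm_mul, Complex.norm_real, Real.norm_eq_abs,
      Complex.norm_exp_ofReal_mul_I, mul_one]
    exact _root_.abs_of_nonneg h0
  have hz1 : ∀ θ, ‖z θ‖ < 1 := fun θ => by rw [hznorm]; exact hr
  set f : ℕ → ℝ → ℂ := fun k θ => b k * z θ ^ k with hfdef
  have hfnorm : ∀ k θ, ‖f k θ‖ = ‖b k‖ * r ^ k := by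
    intro k θ; simp [hfdef, norm_mul, norm_pow, hznorm]
  have hu := KP_absSummable b hb h0 hr
  have hfc : ∀ k, Continuous (f k) := by
    intro k
    apply Continuous.mul continuous_const
    apply Continuous.pow
    exact continuous_const.mul (Complex.continuous_exp.comp
      ((Complex.continuous_ofReal).mul continuous_const))
  set G : ℝ → ℂ := fun θ => ∑' k, f k θ with hGdef
  have hG : ∀ θ, HasSum (fun k => f k θ) (G θ) := fun θ => (hb _ (hz1 θ)).hasSum
  have hGc : Continuous G :=
    continuous_tsum hfc hu (fun n x => le_of_eq (hfnorm n x))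
  -- pairs
  let P : ℕ × ℕ → ℝ → ℂ := fun p θ => f p.1 θ * (starRingEnd ℂ) (f p.2 θ)
  have hPdef : ∀ p θ, P p θ = f p.1 θ * (starRingEnd ℂ) (f p.2 θ) := fun p θ => rfl
  have hPnorm : ∀ p θ, ‖P p θ‖ = (‖b p.1‖ * r ^ p.1) * (‖b p.2‖ * r ^ p.2) := by
    intro p θ
    rw [hPdef, norm_mul, RCLike.norm_conj, hfnorm, hfnorm]
  have huu : Summable fun p : ℕ × ℕ => (‖b p.1‖ * r ^ p.1) * (‖b p.2‖ * r ^ p.2) :=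
    hu.mul_of_nonneg hu (fun k => by positivity) (fun k => by positivity)
  have hPsum : ∀ θ, HasSum (fun p => P p θ) (G θ * (starRingEnd ℂ) (G θ)) := by
    intro θ
    have h2 : HasSum (fun k => (starRingEnd ℂ) (f k θ)) ((starRingEnd ℂ) (G θ)) :=
      Complex.hasSum_conj'.mpr (hG θ)
    have hs : Summable (fun p : ℕ × ℕ => f p.1 θ * (starRingEnd ℂ) (f p.2 θ)) := by
      apply Summable.of_norm
      apply huu.of_nonneg_of_le (fun p => norm_nonneg _)
      intro p
      exact le_of_eq (hPnorm p θ)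
    exact HasSum.mul (f := fun k => f k θ) (g := fun k => (starRingEnd ℂ) (f k θ)) (hG θ) h2 hs
  have hPcont : ∀ p : ℕ × ℕ, Continuous (P p) := fun p =>
    (hfc p.1).mul (Complex.continuous_conj.comp (hfc p.2))
  have hPint : ∀ p : ℕ × ℕ, Integrable (P p) μ := fun p =>
    (hPcont p).integrableOn_Ioc
  have hμIoc : (volume (Set.Ioc (0:ℝ) (2 * Real.pi))).toReal = 2 * Real.pi := by
    rw [Real.volume_Ioc, ENNReal.toReal_ofReal (by nlinarith [Real.pi_pos])]
    ring
  have hPnormInt : ∀ p : ℕ × ℕ, ∫ θ, ‖P p θ‖ ∂μ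
      = 2 * Real.pi * ((‖b p.1‖ * r ^ p.1) * (‖b p.2‖ * r ^ p.2)) := by
    intro p
    simp_rw [hPnorm p]
    rw [integral_const, hμ, measureReal_restrict_apply_univ, measureReal_def, hμIoc, smul_eq_mul]
  have hsumInt : Summable fun p : ℕ × ℕ => ∫ θ, ‖P p θ‖ ∂μ := by
    simp_rw [hPnormInt]
    exact huu.mul_left _
  have hHS : HasSum (fun p : ℕ × ℕ => ∫ θ, P p θ ∂μ)
      (∫ θ, G θ * (starRingEnd ℂ) (G θ) ∂μ) := by
    have h := hasSum_integral_of_summable_integral_norm (F := P) hPint hsumInt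
    have heq : (fun θ => ∑' p : ℕ × ℕ, P p θ) = fun θ => G θ * (starRingEnd ℂ) (G θ) :=
      funext fun θ => (hPsum θ).tsum_eq
    rwa [heq] at h
  have hconjz : ∀ θ, (starRingEnd ℂ) (z θ) = (r:ℂ) * Complex.exp (-(θ * Complex.I)) := by
    intro θ
    rw [hzdef]
    simp only [map_mul, Complex.conj_ofReal, ← Complex.exp_conj]
    congr 2
    simp [Complex.ext_iff]
  have hPformula : ∀ (j k : ℕ) (θ : ℝ), P (j, k) θ
      = (b j * (starRingEnd ℂ) (b k) * (r:ℂ) ^ (j + k))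
        * Complex.exp ((((j:ℤ) - (k:ℤ) : ℤ):ℂ) * θ * Complex.I) := by
    intro j k θ
    rw [hPdef]
    have e1 : z θ ^ j = (r:ℂ) ^ j * Complex.exp ((j:ℕ) * (θ * Complex.I)) := by
      rw [hzdef]
      rw [mul_pow, Complex.exp_nat_mul]
    have e2 : (starRingEnd ℂ) (f k θ)
        = (starRingEnd ℂ) (b k) * ((r:ℂ) ^ k * Complex.exp ((k:ℕ) * -(θ * Complex.I))) := by
      rw [hfdef]
      simp only [map_mul, map_pow, hconjz θ, mul_pow, Complex.exp_nat_mul]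
    rw [hfdef]
    simp only []
    rw [e1, e2]
    have e3 : Complex.exp ((j:ℕ) * (θ * Complex.I)) * Complex.exp ((k:ℕ) * -(θ * Complex.I))
        = Complex.exp ((((j:ℤ) - (k:ℤ) : ℤ):ℂ) * θ * Complex.I) := by
      rw [← Complex.exp_add]
      congr 1
      push_cast
      ring
    rw [pow_add]
    calc b j * ((r:ℂ) ^ j * Complex.exp ((j:ℕ) * (θ * Complex.I)))
          * ((starRingEnd ℂ) (b k) * ((r:ℂ) ^ k * Complex.exp ((k:ℕ) * -(θ * Complex.I))))
        = b j * (starRingEnd ℂ) (b k) * ((r:ℂ) ^ j * (r:ℂ) ^ k)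
          * (Complex.exp ((j:ℕ) * (θ * Complex.I)) * Complex.exp ((k:ℕ) * -(θ * Complex.I))) := by
          ring
      _ = _ := by rw [e3]
  have hT : ∀ j k : ℕ, ∫ θ, P (j, k) θ ∂μ
      = (b j * (starRingEnd ℂ) (b k) * (r:ℂ) ^ (j + k))
        * (if ((j:ℤ) - (k:ℤ) : ℤ) = 0 then ((2 * Real.pi : ℝ) : ℂ) else 0) := by
    intro j k
    simp_rw [hPformula j k]
    rw [MeasureTheory.integral_const_mul]
    congr 1
    exact KP_expInt ((j:ℤ) - (k:ℤ))
  have hTd : ∀ k : ℕ, ∫ θ, P (k, k) θ ∂μ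
      = ((2 * Real.pi * (‖b k‖ ^ 2 * (r ^ 2) ^ k) : ℝ) : ℂ) := by
    intro k
    rw [hT k k]
    simp only [sub_self, if_pos rfl]
    rw [Complex.mul_conj, Complex.normSq_eq_norm_sq]
    have : ((r:ℂ)) ^ (k + k) = (((r ^ 2) ^ k : ℝ) : ℂ) := by
      push_cast
      ring
    rw [this]
    push_cast
    ring
  have hdiagHS : HasSum (fun p : ℕ × ℕ => ∫ θ, P p θ ∂μ)
      (((2 * Real.pi * ∑' k, ‖b k‖ ^ 2 * (r ^ 2) ^ k : ℝ)) : ℂ) := by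
    have hinj : Function.Injective (fun k : ℕ => ((k, k) : ℕ × ℕ)) := by
      intro a b h
      simpa using congrArg Prod.fst h
    have hvan : ∀ p : ℕ × ℕ, p ∉ Set.range (fun k : ℕ => ((k, k) : ℕ × ℕ)) →
        (∫ θ, P p θ ∂μ) = 0 := by
      rintro ⟨j, k⟩ hp
      have hjk : j ≠ k := by
        intro h
        exact hp ⟨j, by simp [h]⟩
      have hne : ((j:ℤ)) ≠ (k:ℤ) := by exact_mod_cast hjk
      rw [hT j k, if_neg (sub_ne_zero.mpr hne)]
      ring
    rw [← Function.Injective.hasSum_iff hinj hvan]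
    have hsq := KP_sqSummable b hb h0 hr
    have h1 : HasSum (fun k : ℕ => 2 * Real.pi * (‖b k‖ ^ 2 * (r ^ 2) ^ k))
        (2 * Real.pi * ∑' k, ‖b k‖ ^ 2 * (r ^ 2) ^ k) := hsq.hasSum.mul_left _
    have h2 := Complex.hasSum_ofReal.mpr h1
    have hfun : ((fun p : ℕ × ℕ => ∫ θ, P p θ ∂μ) ∘ fun k : ℕ => ((k, k) : ℕ × ℕ))
        = fun k : ℕ => ((2 * Real.pi * (‖b k‖ ^ 2 * (r ^ 2) ^ k) : ℝ) : ℂ) :=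
      funext fun k => by rw [Function.comp_apply, hTd k]
    rw [hfun]
    exact h2
  have hint : ∫ θ, G θ * (starRingEnd ℂ) (G θ) ∂μ
      = ((2 * Real.pi * ∑' k, ‖b k‖ ^ 2 * (r ^ 2) ^ k : ℝ) : ℂ) := hHS.unique hdiagHS
  have hGGint : Integrable (fun θ => G θ * (starRingEnd ℂ) (G θ)) μ :=
    (hGc.mul (Complex.continuous_conj.comp hGc)).integrableOn_Ioc
  have hptwise : ∀ θ : ℝ, ‖∑' k, b k * ((r:ℂ) * Complex.exp (θ * Complex.I)) ^ k‖ ^ 2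
      = (G θ * (starRingEnd ℂ) (G θ)).re := by
    intro θ
    have : (∑' k, b k * ((r:ℂ) * Complex.exp (θ * Complex.I)) ^ k) = G θ := rfl
    rw [this, Complex.mul_conj, Complex.ofReal_re, Complex.normSq_eq_norm_sq]
  calc (∫ θ, ‖∑' k, b k * ((r:ℂ) * Complex.exp (θ * Complex.I)) ^ k‖ ^ 2 ∂μ)
      = ∫ θ, (G θ * (starRingEnd ℂ) (G θ)).re ∂μ := by
        apply integral_congr_ae
        filter_upwards with θ using hptwise θ
    _ = (∫ θ, G θ * (starRingEnd ℂ) (G θ) ∂μ).re := by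
        have h := integral_re (μ := μ) hGGint
        simpa only [RCLike.re_to_complex] using h
    _ = 2 * Real.pi * ∑' k, ‖b k‖ ^ 2 * (r ^ 2) ^ k := by
        rw [hint]
        simp

/-- Lemma (Kayumov–Ponnusamy): if `g(z) = ∑ b_k z^k` maps the unit disk into itself
and `0 < R ≤ 1`, then `∑_{k≥1} |b_k|² R^k ≤ R (1-|b₀|²)² / (1 - |b₀|² R)`. -/
theorem stmt_0 (g : ℂ → ℂ) (b : ℕ → ℂ) (R : ℝ)
    (hg : ∀ z : ℂ, ‖z‖ < 1 → HasSum (fun k : ℕ => b k * z ^ k) (g z))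
    (hbd : ∀ z : ℂ, ‖z‖ < 1 → ‖g z‖ < 1)
    (hR0 : 0 < R) (hR1 : R ≤ 1) :
    ∑' k : ℕ, ‖b (k + 1)‖ ^ 2 * R ^ (k + 1) ≤
      R * (1 - ‖b 0‖ ^ 2) ^ 2 / (1 - ‖b 0‖ ^ 2 * R) := by
  have hb : ∀ z : ℂ, ‖z‖ < 1 → Summable fun k => b k * z ^ k :=
    fun z hz => (hg z hz).summable
  -- `g 0 = b 0`
  have hg0 : g 0 = b 0 := by
    have h1 := hg 0 (by norm_num)
    have h2 : HasSum (fun k : ℕ => b k * (0:ℂ) ^ k) (b 0) := by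
      have := hasSum_single (f := fun k : ℕ => b k * (0:ℂ) ^ k) 0
        (fun k hk => by simp [zero_pow hk])
      simpa using this
    exact h1.unique h2
  have ha : ‖b 0‖ < 1 := by rw [← hg0]; exact hbd 0 (by norm_num)
  set a2 : ℝ := ‖b 0‖ ^ 2 with ha2def
  have ha2 : a2 < 1 := by
    rw [ha2def]
    nlinarith [norm_nonneg (b 0)]
  have ha20 : 0 ≤ a2 := by rw [ha2def]; positivity
  -- differentiability of g on the unit ball
  have hdiff : DifferentiableOn ℂ g (Metric.ball 0 1) := by
    set p := FormalMultilinearSeries.ofScalars ℂ b with hpdef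
    have hrad : 1 ≤ p.radius := by
      apply ENNReal.le_of_forall_nnreal_lt
      intro r hr
      apply FormalMultilinearSeries.le_radius_of_summable_norm
      have hr1 : (r : ℝ) < 1 := by exact_mod_cast hr
      have := KP_absSummable b hb (r := (r:ℝ)) r.coe_nonneg hr1
      apply this.congr
      intro n
      rw [hpdef, FormalMultilinearSeries.ofScalars_norm]
    have hps : HasFPowerSeriesOnBall g p 0 1 :=
      { r_le := hrad
        r_pos := one_pos
        hasSum := by
          intro y hy
          rw [EMetric.mem_ball, edist_zero_right, ← ENNReal.coe_one,
            enorm_eq_nnnorm, ENNReal.coe_lt_coe] at hy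
          have hy' : ‖y‖ < 1 := by exact_mod_cast hy
          have := hg y hy'
          simp only [hpdef, FormalMultilinearSeries.ofScalars_apply_eq, smul_eq_mul, zero_add]
          exact this }
    have h2 := hps.differentiableOn
    apply h2.mono
    intro x hx
    rw [Metric.mem_ball, dist_zero_right] at hx
    rw [EMetric.mem_ball, edist_zero_right, ← ENNReal.coe_one, enorm_eq_nnnorm, ENNReal.coe_lt_coe]
    exact_mod_cast hx
  set c : ℂ := (starRingEnd ℂ) (b 0) with hcdef
  have hconjc : (starRingEnd ℂ) c = b 0 := by rw [hcdef, Complex.conj_conj]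
  have hnormc : Complex.normSq c = a2 := by
    rw [hcdef, Complex.normSq_conj, ha2def, ← Complex.sq_norm]
  have hden : ∀ z : ℂ, ‖z‖ < 1 → 1 - c * g z ≠ 0 := by
    intro z hz
    have h1 : ‖c * g z‖ < 1 := by
      rw [norm_mul, hcdef, RCLike.norm_conj]
      calc ‖b 0‖ * ‖g z‖ ≤ 1 * ‖g z‖ :=
            mul_le_mul_of_nonneg_right ha.le (norm_nonneg _)
        _ = ‖g z‖ := one_mul _
        _ < 1 := hbd z hz
    intro h
    have h2 : (1:ℂ) = c * g z := by linear_combination h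
    rw [← h2] at h1
    simp at h1
  -- the key quadratic identity
  have hkey : ∀ w : ℂ, Complex.normSq (1 - c * w) - Complex.normSq (w - b 0)
      = (1 - a2) * (1 - Complex.normSq w) := by
    intro w
    rw [← hnormc, ← hconjc]
    simp only [Complex.normSq_apply, Complex.sub_re, Complex.sub_im, Complex.mul_re,
      Complex.mul_im, Complex.one_re, Complex.one_im, Complex.conj_re, Complex.conj_im]
    ring
  -- the Möbius quotient
  set F : ℂ → ℂ := fun z => (g z - b 0) / (1 - c * g z) with hFdef
  have hFval : ∀ z, F z = (g z - b 0) / (1 - c * g z) := fun z => rfl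
  have hFdiff : DifferentiableOn ℂ F (Metric.ball 0 1) := by
    apply DifferentiableOn.div
    · exact hdiff.sub (differentiableOn_const _)
    · exact (differentiableOn_const _).sub ((differentiableOn_const _).mul hdiff)
    · intro z hz
      rw [Metric.mem_ball, dist_zero_right] at hz
      exact hden z hz
  have hFmaps : Set.MapsTo F (Metric.ball 0 1) (Metric.ball 0 1) := by
    intro z hz
    rw [Metric.mem_ball, dist_zero_right] at hz ⊢
    have hgz := hbd z hz
    have hd := hden z hz
    have hkeyz := hkey (g z)
    have hpos : 0 < (1 - a2) * (1 - Complex.normSq (g z)) := by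
      apply mul_pos (by linarith)
      have : Complex.normSq (g z) < 1 := by
        rw [← Complex.sq_norm]
        nlinarith [norm_nonneg (g z)]
      linarith
    have hlt : Complex.normSq (g z - b 0) < Complex.normSq (1 - c * g z) := by linarith
    rw [hFval, norm_div, div_lt_one (by
      rw [norm_pos_iff]; exact hd)]
    have h1 : ‖g z - b 0‖ ^ 2 < ‖1 - c * g z‖ ^ 2 := by
      rw [Complex.sq_norm, Complex.sq_norm]
      exact hlt
    nlinarith [norm_nonneg (g z - b 0), norm_nonneg (1 - c * g z)]
  have hF0 : F 0 = 0 := by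
    rw [hFval, hg0, sub_self, zero_div]
  have hFle : ∀ z : ℂ, ‖z‖ < 1 → ‖F z‖ ≤ ‖z‖ := by
    intro z hz
    have := Complex.norm_le_norm_of_mapsTo_ball hFdiff
      (hFmaps.mono_right Metric.ball_subset_closedBall) hF0 (z := z) hz
    exact this
  -- pointwise inequality
  have hpt : ∀ z : ℂ, ‖z‖ < 1 → ‖g z - b 0‖ ≤ ‖z‖ * ‖1 - c * g z‖ := by
    intro z hz
    have h1 : g z - b 0 = F z * (1 - c * g z) := by
      rw [hFval, div_mul_cancel₀ _ (hden z hz)]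
    rw [h1, norm_mul]
    exact mul_le_mul_of_nonneg_right (hFle z hz) (norm_nonneg _)
  -- shifted coefficient sequences
  set b' : ℕ → ℂ := fun k => if k = 0 then 0 else b k with hb'def
  set cc : ℕ → ℂ := fun k => if k = 0 then 1 - c * b 0 else -(c * b k) with hccdef
  have hb' : ∀ z : ℂ, ‖z‖ < 1 → HasSum (fun k => b' k * z ^ k) (g z - b 0) := by
    intro z hz
    have h1 : HasSum (fun k : ℕ => if k = 0 then b 0 else 0) (b 0) := hasSum_ite_eq 0 (b 0)
    have h2 := (hg z hz).sub h1
    have hfe : (fun k : ℕ => b k * z ^ k - if k = 0 then b 0 else 0)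
        = fun k => b' k * z ^ k := by
      funext k
      rcases eq_or_ne k 0 with rfl | hk
      · simp [hb'def]
      · simp [hb'def, hk]
    rwa [hfe] at h2
  have hcc : ∀ z : ℂ, ‖z‖ < 1 → HasSum (fun k => cc k * z ^ k) (1 - c * g z) := by
    intro z hz
    have h1 : HasSum (fun k : ℕ => if k = 0 then (1:ℂ) else 0) 1 := hasSum_ite_eq 0 1
    have h2 := h1.sub ((hg z hz).mul_left c)
    have hfe : (fun k : ℕ => (if k = 0 then (1:ℂ) else 0) - c * (b k * z ^ k))
        = fun k => cc k * z ^ k := by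
      funext k
      rcases eq_or_ne k 0 with rfl | hk
      · simp [hccdef]
      · simp [hccdef, hk]
        ring
    rwa [hfe] at h2
  have hb'sum : ∀ z : ℂ, ‖z‖ < 1 → Summable fun k => b' k * z ^ k :=
    fun z hz => (hb' z hz).summable
  have hccsum : ∀ z : ℂ, ‖z‖ < 1 → Summable fun k => cc k * z ^ k :=
    fun z hz => (hcc z hz).summable
  -- summability of the real series
  have hTsummable : ∀ x : ℝ, 0 ≤ x → x < 1 →
      Summable fun k => ‖b (k + 1)‖ ^ 2 * x ^ (k + 1) := by
    intro x h0 h1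
    set r := Real.sqrt x with hrdef
    have hr0 : 0 ≤ r := Real.sqrt_nonneg x
    have hrx : r ^ 2 = x := Real.sq_sqrt h0
    have hr1 : r < 1 := by
      rw [show (1:ℝ) = Real.sqrt 1 by simp [Real.sqrt_one]]
      exact Real.sqrt_lt_sqrt h0 (by linarith)
    have hs := KP_sqSummable b' hb'sum hr0 hr1
    rw [hrx] at hs
    have hs2 := (summable_nat_add_iff 1).2 hs
    apply hs2.congr
    intro n
    simp [hb'def]
  -- the main coefficient estimate at radius `√x`
  have hmain : ∀ x : ℝ, 0 < x → x < 1 →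
      (∑' k, ‖b (k + 1)‖ ^ 2 * x ^ (k + 1)) ≤
        x * ((1 - a2) ^ 2 + a2 * ∑' k, ‖b (k + 1)‖ ^ 2 * x ^ (k + 1)) := by
    intro x hx0 hx1
    set r := Real.sqrt x with hrdef
    have hr0 : 0 ≤ r := Real.sqrt_nonneg x
    have hrx : r ^ 2 = x := Real.sq_sqrt hx0.le
    have hr1 : r < 1 := by
      rw [show (1:ℝ) = Real.sqrt 1 by simp [Real.sqrt_one]]
      exact Real.sqrt_lt_sqrt hx0.le (by linarith)
    have hzθ : ∀ θ : ℝ, ‖(r:ℂ) * Complex.exp (θ * Complex.I)‖ < 1 := by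
      intro θ
      rw [norm_mul, Complex.norm_real, Real.norm_eq_abs,
        Complex.norm_exp_ofReal_mul_I, mul_one, _root_.abs_of_nonneg hr0]
      exact hr1
    -- Parseval for both series
    have P1 := KP_parseval b' hb'sum hr0 hr1
    have P2 := KP_parseval cc hccsum hr0 hr1
    rw [hrx] at P1 P2
    have hfun1 : (fun θ : ℝ => ‖∑' k, b' k * ((r:ℂ) * Complex.exp (θ * Complex.I)) ^ k‖ ^ 2)
        = fun θ : ℝ => ‖g ((r:ℂ) * Complex.exp (θ * Complex.I)) - b 0‖ ^ 2 :=
      funext fun θ => by rw [(hb' _ (hzθ θ)).tsum_eq]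
    have hfun2 : (fun θ : ℝ => ‖∑' k, cc k * ((r:ℂ) * Complex.exp (θ * Complex.I)) ^ k‖ ^ 2)
        = fun θ : ℝ => ‖1 - c * g ((r:ℂ) * Complex.exp (θ * Complex.I))‖ ^ 2 :=
      funext fun θ => by rw [(hcc _ (hzθ θ)).tsum_eq]
    rw [show (fun θ : ℝ => ‖∑' k, b' k * ((r:ℂ) * Complex.exp (θ * Complex.I)) ^ k‖ ^ 2)
      = _ from hfun1] at P1
    rw [show (fun θ : ℝ => ‖∑' k, cc k * ((r:ℂ) * Complex.exp (θ * Complex.I)) ^ k‖ ^ 2)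
      = _ from hfun2] at P2
    -- continuity, hence integrability
    have hzc : Continuous fun θ : ℝ => (r:ℂ) * Complex.exp (θ * Complex.I) :=
      continuous_const.mul (Complex.continuous_exp.comp
        ((Complex.continuous_ofReal).mul continuous_const))
    have hgz : Continuous fun θ : ℝ => g ((r:ℂ) * Complex.exp (θ * Complex.I)) := by
      apply ContinuousOn.comp_continuous hdiff.continuousOn hzc
      intro θ
      rw [Metric.mem_ball, dist_zero_right]
      exact hzθ θ
    have hint1 : MeasureTheory.Integrable
        (fun θ : ℝ => ‖g ((r:ℂ) * Complex.exp (θ * Complex.I)) - b 0‖ ^ 2)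
        (volume.restrict (Set.Ioc (0:ℝ) (2 * Real.pi))) :=
      (((hgz.sub continuous_const).norm).pow 2).integrableOn_Ioc
    have hint2 : MeasureTheory.Integrable
        (fun θ : ℝ => r ^ 2 * ‖1 - c * g ((r:ℂ) * Complex.exp (θ * Complex.I))‖ ^ 2)
        (volume.restrict (Set.Ioc (0:ℝ) (2 * Real.pi))) :=
      (continuous_const.mul (((continuous_const.sub
        (continuous_const.mul hgz)).norm).pow 2)).integrableOn_Ioc
    have hle : (fun θ : ℝ => ‖g ((r:ℂ) * Complex.exp (θ * Complex.I)) - b 0‖ ^ 2)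
        ≤ fun θ : ℝ => r ^ 2 * ‖1 - c * g ((r:ℂ) * Complex.exp (θ * Complex.I))‖ ^ 2 := by
      intro θ
      have h1 := hpt _ (hzθ θ)
      have h2 : ‖(r:ℂ) * Complex.exp (θ * Complex.I)‖ = r := by
        rw [norm_mul, Complex.norm_real, Real.norm_eq_abs,
          Complex.norm_exp_ofReal_mul_I, mul_one, _root_.abs_of_nonneg hr0]
      rw [h2] at h1
      have h4 := pow_le_pow_left₀ (norm_nonneg
        (g ((r:ℂ) * Complex.exp (θ * Complex.I)) - b 0)) h1 2
      simpa [mul_pow] using h4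
    have hIneq := MeasureTheory.integral_mono hint1 hint2 hle
    rw [P1] at hIneq
    rw [MeasureTheory.integral_const_mul, P2] at hIneq
    -- identify the two coefficient sums
    have hSb' : (∑' k, ‖b' k‖ ^ 2 * x ^ k) = ∑' k, ‖b (k + 1)‖ ^ 2 * x ^ (k + 1) := by
      have hsum : Summable fun k => ‖b' k‖ ^ 2 * x ^ k := by
        have := KP_sqSummable b' hb'sum hr0 hr1
        rwa [hrx] at this
      rw [hsum.tsum_eq_zero_add]
      simp [hb'def]
    have hScc : (∑' k, ‖cc k‖ ^ 2 * x ^ k)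
        = (1 - a2) ^ 2 + a2 * ∑' k, ‖b (k + 1)‖ ^ 2 * x ^ (k + 1) := by
      have hsum : Summable fun k => ‖cc k‖ ^ 2 * x ^ k := by
        have := KP_sqSummable cc hccsum hr0 hr1
        rwa [hrx] at this
      rw [hsum.tsum_eq_zero_add]
      have hcc0 : ‖cc 0‖ = 1 - a2 := by
        have : cc 0 = ((1 - a2 : ℝ) : ℂ) := by
          rw [hccdef]
          simp only [if_pos rfl]
          rw [hcdef, Complex.conj_mul']
          push_cast [ha2def]
          ring
        rw [this, Complex.norm_real, Real.norm_eq_abs, _root_.abs_of_nonneg (by linarith)]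
      have hcck : ∀ k : ℕ, ‖cc (k + 1)‖ ^ 2 = a2 * ‖b (k + 1)‖ ^ 2 := by
        intro k
        rw [hccdef]
        simp only [Nat.succ_ne_zero, if_false]
        rw [norm_neg, norm_mul, hcdef, RCLike.norm_conj, mul_pow, ha2def]
      have h4 : (∑' k, ‖cc (k + 1)‖ ^ 2 * x ^ (k + 1))
          = a2 * ∑' k, ‖b (k + 1)‖ ^ 2 * x ^ (k + 1) := by
        rw [← tsum_mul_left]
        congr 1
        funext k
        rw [hcck k]
        ring
      rw [hcc0, h4]
      simp
    rw [hSb', hScc] at hIneq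
    have hπ : (0:ℝ) < 2 * Real.pi := by positivity
    rw [hrx] at hIneq
    have h7 : (2 * Real.pi) * (∑' k, ‖b (k + 1)‖ ^ 2 * x ^ (k + 1))
        ≤ (2 * Real.pi) * (x * ((1 - a2) ^ 2 + a2 * ∑' k, ‖b (k + 1)‖ ^ 2 * x ^ (k + 1))) := by
      ring_nf
      ring_nf at hIneq
      linarith
    exact le_of_mul_le_mul_left h7 hπ
  -- pass to the limit
  have hdenR : 0 < 1 - a2 * R := by nlinarith
  have hRHS0 : 0 ≤ R * (1 - a2) ^ 2 / (1 - a2 * R) :=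
    div_nonneg (by positivity) hdenR.le
  apply tsum_le_of_sum_le' hRHS0
  intro s
  have hcont : Filter.Tendsto (fun x : ℝ => ∑ k ∈ s, ‖b (k + 1)‖ ^ 2 * x ^ (k + 1))
      (nhdsWithin R (Set.Iio R)) (nhds (∑ k ∈ s, ‖b (k + 1)‖ ^ 2 * R ^ (k + 1))) := by
    apply Filter.Tendsto.mono_left _ nhdsWithin_le_nhds
    exact Continuous.tendsto (by continuity) R
  apply le_of_tendsto hcont
  filter_upwards [Ioo_mem_nhdsLT_of_mem (show R ∈ Set.Ioc 0 R from ⟨hR0, le_refl R⟩)]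
    with x hx
  obtain ⟨hx0, hxR⟩ := hx
  have hx1 : x < 1 := lt_of_lt_of_le hxR hR1
  have hdenx : 0 < 1 - a2 * x := by nlinarith
  calc ∑ k ∈ s, ‖b (k + 1)‖ ^ 2 * x ^ (k + 1)
      ≤ ∑' k, ‖b (k + 1)‖ ^ 2 * x ^ (k + 1) :=
        Summable.sum_le_tsum s (fun i _ => by positivity) (hTsummable x hx0.le hx1)
    _ ≤ x * (1 - a2) ^ 2 / (1 - a2 * x) := by
        rw [le_div_iff₀ hdenx]
        nlinarith [hmain x hx0 hx1]
    _ ≤ R * (1 - a2) ^ 2 / (1 - a2 * R) := by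
        rw [div_le_div_iff₀ hdenx hdenR]
        nlinarith [mul_nonneg (sq_nonneg (1 - a2)) (sub_nonneg.mpr hxR.le)]
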